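/- Let G be a finite abelian group, F a field with char F ∤ |G|, K = F(ω) with ord(ω)=exp(G), Γ = Gal(K/F), and M ⊆ B(Ĝ). Suppose that for every Γ-stable subset I ⊆ Ĝ, the ℤ-span of M_I := {m ∈ M : m(ψ)=0 for ψ∉I} contains B(Ĝ)_I := {b ∈ B(Ĝ) : b(ψ)=0 for ψ∉I}. Then the G-invariant monomials {x^m : m ∈ M} separate the G-orbits in the real form F(G,F) ⊂ F(G,K). -/

import Mathlib

/-- The action of the Galois group on characters : `(γ · χ)(g) = γ(χ(g))`. -/
def galChar {F K G : Type*} [Field F] [Field K] [Algebra F K] [Group G]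
    (γ : K ≃ₐ[F] K) (χ : G →* Kˣ) : G →* Kˣ :=
  (Units.map (γ : K →* K)).comp χ

/-- A `ℕ`-valued sequence viewed as a `ℤ`-valued one. -/
noncomputable def natToZ {α : Type*} (m : α →₀ ℕ) : α →₀ ℤ :=
  m.mapRange (Nat.cast : ℕ → ℤ) Nat.cast_zero

lemma natToZ_apply {α : Type*} (m : α →₀ ℕ) (x : α) : natToZ m x = (m x : ℤ) := rfl

lemma natToZ_add {α : Type*} (m m' : α →₀ ℕ) : natToZ (m + m') = natToZ m + natToZ m' := by
  ext x; simp [natToZ_apply]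

lemma natToZ_smul {α : Type*} (k : ℕ) (m : α →₀ ℕ) : natToZ (k • m) = (k : ℤ) • natToZ m := by
  ext x; simp [natToZ_apply]

lemma natToZ_single {α : Type*} (a : α) (n : ℕ) :
    natToZ (Finsupp.single a n) = Finsupp.single a (n : ℤ) := by
  ext x
  rcases eq_or_ne x a with rfl | h
  · simp [natToZ_apply]
  · simp [natToZ_apply, Finsupp.single_eq_of_ne' (Ne.symm h)]

lemma liftAddHom_zmul_natToZ {α H : Type*} [DecidableEq α] [CommGroup H] (φ : α → H) (m : α →₀ ℕ) :
    Additive.toMul ((Finsupp.liftAddHom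
        (fun a : α => zmultiplesHom (Additive H) (Additive.ofMul (φ a)))) (natToZ m))
      = m.prod fun a k => φ a ^ k := by
  induction m using Finsupp.induction with
  | zero => simp [natToZ]
  | single_add a n m' ha' hn ih =>
    rw [natToZ_add, natToZ_single, map_add, toMul_add, Finsupp.liftAddHom_apply_single,
      zmultiplesHom_apply, toMul_zsmul, toMul_ofMul, zpow_natCast, ih,
      Finsupp.prod_add_index (by intro a _; exact pow_zero _)
        (by intro a _ b₁ b₂; exact pow_add _ _ _)]
    congr 1
    exact (Finsupp.prod_single_index (h := fun a k => φ a ^ k) (pow_zero _)).symm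

lemma char_extend {B M : Type*} [CommGroup B] [Finite B] [CommMonoid M] {n : ℕ} [NeZero n]
    [HasEnoughRootsOfUnity M n] (hB : ∀ x : B, x ^ n = 1) (A : Subgroup B) (lam : A →* Mˣ) :
    ∃ Λ : B →* Mˣ, ∀ x : A, Λ x = lam x := by
  haveI iB : HasEnoughRootsOfUnity M (Monoid.exponent B) :=
    HasEnoughRootsOfUnity.of_dvd M (Monoid.exponent_dvd_of_forall_pow_eq_one hB)
  haveI iA : HasEnoughRootsOfUnity M (Monoid.exponent A) :=
    HasEnoughRootsOfUnity.of_dvd M (Monoid.exponent_dvd_of_forall_pow_eq_one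
      (fun a => by ext; simpa using hB a.val))
  haveI iQ : HasEnoughRootsOfUnity M (Monoid.exponent (B ⧸ A)) :=
    HasEnoughRootsOfUnity.of_dvd M (Monoid.exponent_dvd_of_forall_pow_eq_one
      (fun q => by
        induction q using QuotientGroup.induction_on with
        | _ x =>
          show ((x ^ n : B) : B ⧸ A) = 1
          rw [hB x, QuotientGroup.mk_one]))
  obtain ⟨eB⟩ := CommGroup.monoidHom_mulEquiv_of_hasEnoughRootsOfUnity B M
  obtain ⟨eA⟩ := CommGroup.monoidHom_mulEquiv_of_hasEnoughRootsOfUnity A M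
  obtain ⟨eQ⟩ := CommGroup.monoidHom_mulEquiv_of_hasEnoughRootsOfUnity (B ⧸ A) M
  haveI : Finite (B →* Mˣ) := Finite.of_equiv B eB.symm.toEquiv
  haveI : Finite (A →* Mˣ) := Finite.of_equiv A eA.symm.toEquiv
  haveI : Finite (B ⧸ A →* Mˣ) := Finite.of_equiv (B ⧸ A) eQ.symm.toEquiv
  let res : (B →* Mˣ) →* (A →* Mˣ) :=
    { toFun := fun Λ => Λ.comp A.subtype
      map_one' := rfl
      map_mul' := fun _ _ => rfl }
  have hkercard : Nat.card res.ker = Nat.card (B ⧸ A →* Mˣ) := by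
    refine (Nat.card_congr ?_).symm
    refine
      { toFun := fun φ => ⟨φ.comp (QuotientGroup.mk' A), ?_⟩
        invFun := fun Λ => QuotientGroup.lift A Λ.val ?_
        left_inv := ?_
        right_inv := ?_ }
    · have : ∀ x : A, (φ.comp (QuotientGroup.mk' A)) x = 1 := fun x => by
        simp only [MonoidHom.coe_comp, Function.comp_apply, QuotientGroup.mk'_apply]
        rw [(QuotientGroup.eq_one_iff _).mpr x.2, map_one]
      exact MonoidHom.ext fun x => this x
    · intro a ha
      have := Λ.2
      rw [MonoidHom.mem_ker] at this
      exact DFunLike.congr_fun this ⟨a, ha⟩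
    · intro φ
      refine MonoidHom.ext fun q => ?_
      induction q using QuotientGroup.induction_on with
      | _ x => rfl
    · intro Λ
      exact Subtype.ext (MonoidHom.ext fun x => rfl)
  have hrange : Nat.card res.range * Nat.card res.ker = Nat.card (B →* Mˣ) := by
    rw [Subgroup.card_eq_card_quotient_mul_card_subgroup res.ker]
    congr 1
    exact Nat.card_congr (QuotientGroup.quotientKerEquivRange res).toEquiv.symm
  have hcardB : Nat.card (B →* Mˣ) = Nat.card B := Nat.card_congr eB.toEquiv
  have hcardA : Nat.card (A →* Mˣ) = Nat.card A := Nat.card_congr eA.toEquiv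
  have hcardQ : Nat.card (B ⧸ A →* Mˣ) = Nat.card (B ⧸ A) := Nat.card_congr eQ.toEquiv
  have hLag : Nat.card B = Nat.card (B ⧸ A) * Nat.card A :=
    Subgroup.card_eq_card_quotient_mul_card_subgroup A
  have hkpos : 0 < Nat.card res.ker := Nat.card_pos
  have hcard : Nat.card res.range = Nat.card (A →* Mˣ) := by
    have h1 : Nat.card res.range * Nat.card res.ker
        = Nat.card (A →* Mˣ) * Nat.card res.ker := by
      rw [hrange, hcardB, hLag, hcardA, hkercard, hcardQ]; ring
    exact Nat.eq_of_mul_eq_mul_right hkpos h1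
  have htop : res.range = ⊤ := Subgroup.eq_top_of_card_eq _ hcard
  have hsurj : Function.Surjective res := MonoidHom.range_eq_top.mp htop
  obtain ⟨Λ, hΛ⟩ := hsurj lam
  exact ⟨Λ, fun x => DFunLike.congr_fun hΛ x⟩

/-- Evaluation `G → ((G →* Mˣ) →* Mˣ)` is surjective for a finite abelian group `G`
when `M` has enough roots of unity. -/
lemma eval_surjective {G M : Type*} [CommGroup G] [Finite G] [CommMonoid M]
    [HasEnoughRootsOfUnity M (Monoid.exponent G)] (Λ : (G →* Mˣ) →* Mˣ) :
    ∃ g : G, ∀ ψ : G →* Mˣ, ψ g = Λ ψ := by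
  obtain ⟨e1⟩ := CommGroup.monoidHom_mulEquiv_of_hasEnoughRootsOfUnity G M
  haveI : Finite (G →* Mˣ) := Finite.of_equiv G e1.symm.toEquiv
  have hexp : Monoid.exponent (G →* Mˣ) = Monoid.exponent G := Monoid.exponent_eq_of_mulEquiv e1
  haveI : HasEnoughRootsOfUnity M (Monoid.exponent (G →* Mˣ)) := hexp ▸ ‹_›
  obtain ⟨e2⟩ := CommGroup.monoidHom_mulEquiv_of_hasEnoughRootsOfUnity (G →* Mˣ) M
  haveI : Finite ((G →* Mˣ) →* Mˣ) := Finite.of_equiv _ e2.symm.toEquiv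
  let ev : G →* ((G →* Mˣ) →* Mˣ) :=
    { toFun := fun g =>
        { toFun := fun ψ => ψ g
          map_one' := rfl
          map_mul' := fun _ _ => rfl }
      map_one' := MonoidHom.ext fun ψ => map_one ψ
      map_mul' := fun g h => MonoidHom.ext fun ψ => map_mul ψ g h }
  have hinj : Function.Injective ev := by
    intro g h hgh
    by_contra hne
    have h1 : g * h⁻¹ ≠ 1 := by
      intro h1; exact hne (by rwa [mul_inv_eq_one] at h1)
    obtain ⟨φ, hφ⟩ := CommGroup.exists_apply_ne_one_of_hasEnoughRootsOfUnity G M h1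
    apply hφ
    have := DFunLike.congr_fun hgh φ
    simp only [ev, MonoidHom.coe_mk, OneHom.coe_mk] at this
    rw [map_mul, map_inv, this, mul_inv_cancel]
  have hbij : Function.Bijective ev := by
    haveI : Fintype G := Fintype.ofFinite G
    haveI : Fintype (G →* Mˣ) := Fintype.ofFinite _
    haveI : Fintype ((G →* Mˣ) →* Mˣ) := Fintype.ofFinite _
    rw [Fintype.bijective_iff_injective_and_card]
    refine ⟨hinj, ?_⟩
    have c1 : Fintype.card (G →* Mˣ) = Fintype.card G := Fintype.card_congr e1.toEquiv
    have c2 : Fintype.card ((G →* Mˣ) →* Mˣ) = Fintype.card (G →* Mˣ) :=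
      Fintype.card_congr e2.toEquiv
    omega
  obtain ⟨g, hg⟩ := hbij.2 Λ
  exact ⟨g, fun ψ => by rw [← hg]; rfl⟩


set_option maxHeartbeats 1600000 in
/-- Separating monomials over a non-closed field: if for every `Γ`-stable subset
`I ⊆ Ĝ` the `ℤ`-span of `M_I` contains `B(Ĝ)_I`, then the invariant monomials
`{x^m : m ∈ M}` separate the `G`-orbits in the rational form `F(G,F) ⊆ F(G,K)`. -/
theorem monomials_separate_orbits_of_span_condition
    {G : Type*} [CommGroup G] [Fintype G]
    {F K : Type*} [Field F] [Field K] [Algebra F K]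
    (hchar : (Fintype.card G : F) ≠ 0)
    (ω : K) (hω : orderOf ω = Monoid.exponent G)
    (hK : IntermediateField.adjoin F {ω} = ⊤)
    (b : Module.Basis (G →* Kˣ) K (G → K))
    (heig : ∀ (ψ : G →* Kˣ) (g : G), (fun h => b ψ (g⁻¹ * h)) = fun h => ((ψ g : Kˣ) : K) * b ψ h)
    (hequiv : ∀ (γ : K ≃ₐ[F] K) (ψ : G →* Kˣ), (fun h => γ (b ψ h)) = b (galChar γ ψ))
    (M : Set ((G →* Kˣ) →₀ ℕ))
    (hM : ∀ m ∈ M, m.prod (fun ψ k => ψ ^ k) = 1)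
    (hstar : ∀ I : Set (G →* Kˣ),
      (∀ (γ : K ≃ₐ[F] K) (ψ : G →* Kˣ), ψ ∈ I → galChar γ ψ ∈ I) →
      ∀ s : (G →* Kˣ) →₀ ℕ, s.prod (fun ψ k => ψ ^ k) = 1 →
        (∀ ψ : G →* Kˣ, ψ ∉ I → s ψ = 0) →
        natToZ s ∈ Submodule.span ℤ
          (natToZ '' {m | m ∈ M ∧ ∀ ψ : G →* Kˣ, ψ ∉ I → m ψ = 0}))
    (v w : G → K)
    (hv : ∀ g : G, v g ∈ Set.range (algebraMap F K))
    (hw : ∀ g : G, w g ∈ Set.range (algebraMap F K)) :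
    (∃ g : G, (fun h => v (g⁻¹ * h)) = w) ↔
      ∀ m ∈ M, m.prod (fun ψ k => (b.repr v ψ) ^ k) =
        m.prod (fun ψ k => (b.repr w ψ) ^ k) := by
  classical
  haveI : Fintype (G →* Kˣ) := FiniteDimensional.fintypeBasisIndex b
  -- the reparametrization by a group element, on the level of coordinates
  have hfwd : ∀ (x : G → K) (g : G) (ψ : G →* Kˣ),
      b.repr (fun h => x (g⁻¹ * h)) ψ = ((ψ g : Kˣ) : K) * b.repr x ψ := by
    intro x g ψ
    have h1 : (fun h => x (g⁻¹ * h)) = ∑ φ : G →* Kˣ, (((φ g : Kˣ) : K) * b.repr x φ) • b φ := by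
      funext h
      have hx : x = ∑ φ : G →* Kˣ, b.repr x φ • b φ := (b.sum_repr x).symm
      calc x (g⁻¹ * h) = (∑ φ : G →* Kˣ, b.repr x φ • b φ) (g⁻¹ * h) := by rw [← hx]
        _ = ∑ φ : G →* Kˣ, b.repr x φ * b φ (g⁻¹ * h) := by
            simp [Finset.sum_apply]
        _ = ∑ φ : G →* Kˣ, b.repr x φ * (((φ g : Kˣ) : K) * b φ h) := by
            refine Finset.sum_congr rfl fun φ _ => ?_
            rw [congrFun (heig φ g) h]
        _ = (∑ φ : G →* Kˣ, (((φ g : Kˣ) : K) * b.repr x φ) • b φ) h := by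
            simp only [Finset.sum_apply, Pi.smul_apply, smul_eq_mul]
            exact Finset.sum_congr rfl fun φ _ => by ring
    rw [h1]
    have := b.repr_sum_self (fun φ : G →* Kˣ => ((φ g : Kˣ) : K) * b.repr x φ)
    rw [congrFun this ψ]
  -- Galois equivariance of coordinates of rational vectors
  have stepA : ∀ (x : G → K), (∀ g, x g ∈ Set.range (algebraMap F K)) →
      ∀ (γ : K ≃ₐ[F] K) (ψ : G →* Kˣ), b.repr x (galChar γ ψ) = γ (b.repr x ψ) := by
    intro x hx γ ψ
    have hinv1 : ∀ φ : G →* Kˣ, galChar γ.symm (galChar γ φ) = φ := by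
      intro φ; ext g; simp [galChar]
    have hinv2 : ∀ φ : G →* Kˣ, galChar γ (galChar γ.symm φ) = φ := by
      intro φ; ext g; simp [galChar]
    let σ : (G →* Kˣ) ≃ (G →* Kˣ) := ⟨galChar γ, galChar γ.symm, hinv1, hinv2⟩
    have hxfix : x = ∑ φ : G →* Kˣ, γ (b.repr x (σ.symm φ)) • b φ := by
      funext h
      have h0 : γ (x h) = x h := by
        obtain ⟨r, hr⟩ := hx h; rw [← hr]; exact γ.commutes r
      calc x h = γ (x h) := h0.symm
        _ = γ ((∑ φ : G →* Kˣ, b.repr x φ • b φ) h) := by rw [b.sum_repr x]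
        _ = ∑ φ : G →* Kˣ, γ (b.repr x φ) * γ (b φ h) := by
            simp [Finset.sum_apply, map_sum]
        _ = ∑ φ : G →* Kˣ, γ (b.repr x φ) * b (galChar γ φ) h := by
            refine Finset.sum_congr rfl fun φ _ => ?_
            rw [← congrFun (hequiv γ φ) h]
        _ = ∑ φ : G →* Kˣ, γ (b.repr x (σ.symm φ)) * b φ h := by
            rw [← Equiv.sum_comp σ (fun φ => γ (b.repr x (σ.symm φ)) * b φ h)]
            refine Finset.sum_congr rfl fun φ _ => ?_
            simp [σ, hinv1]
        _ = (∑ φ : G →* Kˣ, γ (b.repr x (σ.symm φ)) • b φ) h := by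
            simp [Finset.sum_apply]
    have h2 := b.repr_sum_self (fun φ : G →* Kˣ => γ (b.repr x (σ.symm φ)))
    have h3 : ⇑(b.repr x) = fun φ => γ (b.repr x (σ.symm φ)) := by
      conv_lhs => rw [hxfix]
      exact h2
    have h4 := congrFun h3 (galChar γ ψ)
    simpa [σ, hinv1] using h4
  let evalg : G → ((G →* Kˣ) →* Kˣ) := fun g =>
    { toFun := fun χ => χ g
      map_one' := rfl
      map_mul' := fun _ _ => rfl }
  constructor
  · rintro ⟨g, hg⟩ m hm
    have hrepr : ∀ ψ, b.repr w ψ = ((ψ g : Kˣ) : K) * b.repr v ψ := by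
      intro ψ; rw [← hg]; exact hfwd v g ψ
    have hsplit : m.prod (fun ψ k => (b.repr w ψ)^k)
        = m.prod (fun ψ k => ((ψ g : Kˣ) : K)^k) * m.prod (fun ψ k => (b.repr v ψ)^k) := by
      rw [Finsupp.prod, Finsupp.prod, Finsupp.prod, ← Finset.prod_mul_distrib]
      exact Finset.prod_congr rfl fun ψ _ => by rw [hrepr ψ, mul_pow]
    have hone : m.prod (fun ψ k => ((ψ g : Kˣ) : K)^k) = 1 := by
      have h1 := map_finsuppProd ((Units.coeHom K).comp (evalg g)) m (fun ψ k => ψ ^ k)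
      rw [hM m hm, map_one] at h1
      refine Eq.trans (Finsupp.prod_congr fun ψ k => ?_) h1.symm
      simp [evalg, MonoidHom.pow_apply]
    rw [hsplit, hone, one_mul]
  · intro hsep
    haveI : NeZero (Monoid.exponent G) := ⟨Monoid.exponent_ne_zero_of_finite⟩
    haveI hroots : HasEnoughRootsOfUnity K (Monoid.exponent G) :=
      { prim := ⟨ω, hω ▸ IsPrimitiveRoot.orderOf ω⟩
        cyc := rootsOfUnity.isCyclic K (Monoid.exponent G) }
    have hGpow : ∀ χ : G →* Kˣ, χ ^ (Monoid.exponent G) = 1 := by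
      intro χ
      ext g
      rw [MonoidHom.pow_apply, ← map_pow, Monoid.pow_exponent_eq_one, map_one,
        MonoidHom.one_apply]
    -- support comparison
    have hsupp_core : ∀ (x y : G → K), (∀ g, x g ∈ Set.range (algebraMap F K)) →
        (∀ m ∈ M, m.prod (fun ψ k => (b.repr x ψ)^k) = m.prod (fun ψ k => (b.repr y ψ)^k)) →
        ∀ ψ₀, b.repr x ψ₀ ≠ 0 → b.repr y ψ₀ ≠ 0 := by
      intro x y hx hxy ψ₀ hψ₀
      have hIstab : ∀ (γ : K ≃ₐ[F] K), ∀ ψ ∈ {ψ : G →* Kˣ | b.repr x ψ ≠ 0},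
          galChar γ ψ ∈ {ψ : G →* Kˣ | b.repr x ψ ≠ 0} := by
        intro γ ψ hψ
        show b.repr x (galChar γ ψ) ≠ 0
        rw [stepA x hx γ ψ]
        exact fun h0 => hψ (γ.injective (by rw [h0, map_zero]))
      have hmsupp : ∀ m ∈ M, (∀ ψ ∉ {ψ : G →* Kˣ | b.repr x ψ ≠ 0}, m ψ = 0) →
          ∀ ψ, m ψ ≠ 0 → b.repr y ψ ≠ 0 := by
        intro m hmM hmI
        have hxv : m.prod (fun ψ k => (b.repr x ψ)^k) ≠ 0 := by
          rw [Finsupp.prod]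
          refine Finset.prod_ne_zero_iff.mpr fun ψ hψ => pow_ne_zero _ ?_
          by_contra h0
          exact (Finsupp.mem_support_iff.mp hψ) (hmI ψ (by simp [h0]))
        have hyv : m.prod (fun ψ k => (b.repr y ψ)^k) ≠ 0 := by
          rw [← hxy m hmM]; exact hxv
        intro ψ hmψ
        rw [Finsupp.prod] at hyv
        have hfac := Finset.prod_ne_zero_iff.mp hyv ψ (Finsupp.mem_support_iff.mpr hmψ)
        exact fun h0 => hfac (by rw [h0, zero_pow hmψ])
      have hs1 : (Finsupp.single ψ₀ (orderOf ψ₀)).prod (fun ψ k => ψ ^ k) = 1 := by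
        rw [Finsupp.prod_single_index (pow_zero _), pow_orderOf_eq_one]
      have hs2 : ∀ ψ ∉ {ψ : G →* Kˣ | b.repr x ψ ≠ 0},
          (Finsupp.single ψ₀ (orderOf ψ₀)) ψ = 0 := by
        intro ψ hψ
        rcases eq_or_ne ψ ψ₀ with rfl | hne
        · exact absurd hψ₀ hψ
        · rw [Finsupp.single_eq_of_ne' (Ne.symm hne)]
      have hmem := hstar _ hIstab _ hs1 hs2
      let P : Submodule ℤ ((G →* Kˣ) →₀ ℤ) :=
        { carrier := {t | ∀ ψ, b.repr y ψ = 0 → t ψ = 0}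
          add_mem' := fun {t t'} ht ht' ψ h => by
            rw [Finsupp.add_apply, ht ψ h, ht' ψ h, add_zero]
          zero_mem' := fun ψ _ => rfl
          smul_mem' := fun z t ht ψ h => by
            rw [Finsupp.smul_apply, ht ψ h, smul_zero] }
      have hgen : natToZ '' {m | m ∈ M ∧ ∀ ψ ∉ {ψ : G →* Kˣ | b.repr x ψ ≠ 0}, m ψ = 0}
          ⊆ (P : Set ((G →* Kˣ) →₀ ℤ)) := by
        rintro _ ⟨m, ⟨hmM, hmI⟩, rfl⟩ ψ hcψ
        show (m ψ : ℤ) = 0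
        by_contra hne
        have hne' : m ψ ≠ 0 := fun h0 => hne (by rw [h0]; rfl)
        exact (hmsupp m hmM hmI ψ hne') hcψ
      have hP := Submodule.span_le.mpr hgen hmem
      intro h0
      have hcontr := hP ψ₀ h0
      have hord : orderOf ψ₀ ≠ 0 := (orderOf_pos ψ₀).ne'
      rw [natToZ_apply, Finsupp.single_eq_same] at hcontr
      exact hord (by exact_mod_cast hcontr)
    have hsuppvw : ∀ ψ, b.repr v ψ ≠ 0 → b.repr w ψ ≠ 0 := hsupp_core v w hv hsep
    have hsuppwv : ∀ ψ, b.repr w ψ ≠ 0 → b.repr v ψ ≠ 0 :=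
      hsupp_core w v hw (fun m hm => (hsep m hm).symm)
    have hIstab : ∀ (γ : K ≃ₐ[F] K), ∀ ψ ∈ {ψ : G →* Kˣ | b.repr v ψ ≠ 0},
        galChar γ ψ ∈ {ψ : G →* Kˣ | b.repr v ψ ≠ 0} := by
      intro γ ψ hψ
      show b.repr v (galChar γ ψ) ≠ 0
      rw [stepA v hv γ ψ]
      exact fun h0 => hψ (γ.injective (by rw [h0, map_zero]))
    set u : (G →* Kˣ) → Kˣ := fun ψ =>
      if h : b.repr v ψ ≠ 0 ∧ b.repr w ψ ≠ 0
      then Units.mk0 (b.repr w ψ) h.2 * (Units.mk0 (b.repr v ψ) h.1)⁻¹ else 1 with hu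
    have hu_val : ∀ ψ, ∀ (h1 : b.repr v ψ ≠ 0) (h2 : b.repr w ψ ≠ 0),
        ((u ψ : Kˣ) : K) = b.repr w ψ * (b.repr v ψ)⁻¹ := by
      intro ψ h1 h2
      rw [hu]
      simp only [dif_pos (And.intro h1 h2)]
      rw [Units.val_mul, Units.val_inv_eq_inv_val, Units.val_mk0, Units.val_mk0]
    set f' : ((G →* Kˣ) →₀ ℤ) →+ Additive (G →* Kˣ) :=
      Finsupp.liftAddHom (M := ℤ) (N := Additive (G →* Kˣ)) (fun ψ : G →* Kˣ => zmultiplesHom (Additive (G →* Kˣ)) (Additive.ofMul ψ)) with hf'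
    set Φ' : ((G →* Kˣ) →₀ ℤ) →+ Additive Kˣ :=
      Finsupp.liftAddHom (M := ℤ) (N := Additive Kˣ) (fun ψ : G →* Kˣ => zmultiplesHom (Additive Kˣ) (Additive.ofMul (u ψ))) with hΦ'
    have hconnf : ∀ m : (G →* Kˣ) →₀ ℕ,
        Additive.toMul (f' (natToZ m)) = m.prod fun ψ k => ψ ^ k :=
      fun m => liftAddHom_zmul_natToZ _ m
    have hconnΦ : ∀ m : (G →* Kˣ) →₀ ℕ,
        Additive.toMul (Φ' (natToZ m)) = m.prod fun ψ k => u ψ ^ k :=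
      fun m => liftAddHom_zmul_natToZ _ m
    -- Φ' kills the span of M_I
    have hΦM : ∀ z ∈ Submodule.span ℤ
        (natToZ '' {m | m ∈ M ∧ ∀ ψ ∉ {ψ : G →* Kˣ | b.repr v ψ ≠ 0}, m ψ = 0}),
        Φ' z = 0 := by
      intro z hz
      induction hz using Submodule.span_induction with
      | mem z hzmem =>
        obtain ⟨m, ⟨hmM, hmI⟩, rfl⟩ := hzmem
        have huval : m.prod (fun ψ k => u ψ ^ k) = 1 := by
          have hsub : ∀ ψ, m ψ ≠ 0 → b.repr v ψ ≠ 0 := by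
            intro ψ hψ
            by_contra h0
            exact hψ (hmI ψ (by simp [h0]))
          apply Units.ext
          have hval := map_finsuppProd (Units.coeHom K) m (fun ψ k => u ψ ^ k)
          simp only [Units.coeHom_apply] at hval
          rw [hval]
          have hXv : m.prod (fun ψ k => (b.repr v ψ)^k) ≠ 0 := by
            rw [Finsupp.prod]
            refine Finset.prod_ne_zero_iff.mpr fun ψ hψ => pow_ne_zero _ ?_
            exact hsub ψ (Finsupp.mem_support_iff.mp hψ)
          have hstep : m.prod (fun ψ k => ((u ψ ^ k : Kˣ) : K))
              = m.prod (fun ψ k => (b.repr w ψ)^k) * (m.prod (fun ψ k => (b.repr v ψ)^k))⁻¹ := by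
            rw [Finsupp.prod, Finsupp.prod, Finsupp.prod, ← Finset.prod_inv_distrib,
              ← Finset.prod_mul_distrib]
            refine Finset.prod_congr rfl fun ψ hψ => ?_
            have hvψ := hsub ψ (Finsupp.mem_support_iff.mp hψ)
            have hwψ := hsuppvw ψ hvψ
            rw [hu]
            simp only [dif_pos (And.intro hvψ hwψ)]
            rw [Units.val_pow_eq_pow_val, Units.val_mul, Units.val_inv_eq_inv_val,
              Units.val_mk0, Units.val_mk0, mul_pow, inv_pow]
          rw [hstep, ← hsep m hmM, mul_inv_cancel₀ hXv, Units.val_one]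
        have : Additive.toMul (Φ' (natToZ m)) = Additive.toMul (0 : Additive Kˣ) := by
          rw [hconnΦ m, huval]; rfl
        exact Additive.toMul.injective this
      | zero => rw [map_zero]
      | add z₁ z₂ _ _ h₁ h₂ => rw [map_add, h₁, h₂, add_zero]
      | smul k z _ h => rw [map_zsmul, h, smul_zero]
    have hekill : ∀ z : Additive (G →* Kˣ), ((Monoid.exponent G : ℤ)) • z = 0 := by
      intro z
      have h1 : Additive.toMul (((Monoid.exponent G : ℤ)) • z)
          = Additive.toMul (0 : Additive (G →* Kˣ)) := by
        rw [toMul_zsmul, zpow_natCast, hGpow, toMul_zero]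
      exact Additive.toMul.injective h1
    have key : ∀ t : (G →* Kˣ) →₀ ℤ,
        (∀ ψ ∉ {ψ : G →* Kˣ | b.repr v ψ ≠ 0}, t ψ = 0) → f' t = 0 → Φ' t = 0 := by
      intro t htI hft
      set p := t.mapRange Int.toNat Int.toNat_zero with hp
      set q := (-t).mapRange Int.toNat Int.toNat_zero with hq
      have hpq : natToZ p - natToZ q = t := by
        ext ψ
        rw [Finsupp.sub_apply, natToZ_apply, natToZ_apply, hp, hq, Finsupp.mapRange_apply,
          Finsupp.mapRange_apply, Finsupp.neg_apply]
        exact Int.toNat_sub_toNat_neg (t ψ)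
      have he1 : 1 ≤ Monoid.exponent G := Nat.one_le_iff_ne_zero.mpr (NeZero.ne _)
      have hcast : ((Monoid.exponent G - 1 : ℕ) : ℤ) = (Monoid.exponent G : ℤ) - 1 := by
        push_cast [he1]; ring
      have hfpq : f' (natToZ p) = f' (natToZ q) := by
        have hh := map_sub f' (natToZ p) (natToZ q)
        rw [hpq, hft] at hh
        exact sub_eq_zero.mp hh.symm
      have hS1z : natToZ (p + (Monoid.exponent G - 1) • q)
          = natToZ p + ((Monoid.exponent G - 1 : ℕ) : ℤ) • natToZ q := by
        rw [natToZ_add, natToZ_smul]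
      have hS2z : natToZ ((Monoid.exponent G) • q) = (Monoid.exponent G : ℤ) • natToZ q :=
        natToZ_smul _ _
      have hfS1 : f' (natToZ (p + (Monoid.exponent G - 1) • q)) = 0 := by
        apply Additive.toMul.injective
        rw [hS1z, map_add, map_zsmul, hfpq, toMul_add, toMul_zsmul, toMul_zero]
        set χ := Additive.toMul (f' (natToZ q)) with hχ
        have hχe : χ ^ ((Monoid.exponent G : ℤ)) = 1 := by
          exact (zpow_natCast χ _).trans (hGpow χ)
        calc χ * χ ^ ((Monoid.exponent G - 1 : ℕ) : ℤ)
            = χ ^ ((1 : ℤ) + ((Monoid.exponent G : ℤ) - 1)) := by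
              rw [hcast]; have h := zpow_add χ 1 ((Monoid.exponent G : ℤ) - 1); rw [zpow_one] at h; exact h.symm
          _ = χ ^ ((Monoid.exponent G : ℤ)) := by norm_num
          _ = 1 := hχe
      have hfS2 : f' (natToZ ((Monoid.exponent G) • q)) = 0 := by
        rw [hS2z, map_zsmul, hekill]
      have hS1supp : ∀ ψ ∉ {ψ : G →* Kˣ | b.repr v ψ ≠ 0},
          (p + (Monoid.exponent G - 1) • q) ψ = 0 := by
        intro ψ hψ
        rw [Finsupp.add_apply, Finsupp.smul_apply, hp, hq, Finsupp.mapRange_apply,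
          Finsupp.mapRange_apply, Finsupp.neg_apply, htI ψ hψ]
        simp
      have hS2supp : ∀ ψ ∉ {ψ : G →* Kˣ | b.repr v ψ ≠ 0},
          ((Monoid.exponent G) • q) ψ = 0 := by
        intro ψ hψ
        rw [Finsupp.smul_apply, hq, Finsupp.mapRange_apply, Finsupp.neg_apply, htI ψ hψ]
        simp
      have hS1prod : (p + (Monoid.exponent G - 1) • q).prod (fun ψ k => ψ ^ k) = 1 := by
        rw [← hconnf, hfS1, toMul_zero]
      have hS2prod : ((Monoid.exponent G) • q).prod (fun ψ k => ψ ^ k) = 1 := by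
        rw [← hconnf, hfS2, toMul_zero]
      have hm1 := hstar _ hIstab _ hS1prod hS1supp
      have hm2 := hstar _ hIstab _ hS2prod hS2supp
      have hdiff : Φ' t = Φ' (natToZ (p + (Monoid.exponent G - 1) • q))
          - Φ' (natToZ ((Monoid.exponent G) • q)) := by
        rw [← map_sub]
        congr 1
        rw [hS1z, hS2z, hcast, ← hpq, sub_smul, one_smul]
        abel
      rw [hdiff, hΦM _ hm1, hΦM _ hm2, sub_zero]
    -- well-definedness on equal images
    have key2 : ∀ t t' : (G →* Kˣ) →₀ ℤ,
        (∀ ψ ∉ {ψ : G →* Kˣ | b.repr v ψ ≠ 0}, t ψ = 0) →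
        (∀ ψ ∉ {ψ : G →* Kˣ | b.repr v ψ ≠ 0}, t' ψ = 0) →
        f' t = f' t' → Φ' t = Φ' t' := by
      intro t t' ht ht' hff
      have h1 := key (t - t')
        (fun ψ hψ => by rw [Finsupp.sub_apply, ht ψ hψ, ht' ψ hψ, sub_zero])
        (by rw [map_sub, hff]; exact sub_self (f' t'))
      rw [map_sub] at h1
      exact sub_eq_zero.mp h1
    -- the subgroup generated by the support and the character on it
    let Asg : Subgroup (G →* Kˣ) :=
      { carrier := {χ | ∃ t : (G →* Kˣ) →₀ ℤ,
          (∀ ψ ∉ {ψ : G →* Kˣ | b.repr v ψ ≠ 0}, t ψ = 0) ∧ f' t = Additive.ofMul χ}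
        one_mem' := ⟨0, fun ψ _ => rfl, by rw [map_zero]; rfl⟩
        mul_mem' := by
          rintro χ χ' ⟨t, ht, hft⟩ ⟨t', ht', hft'⟩
          exact ⟨t + t', fun ψ hψ => by rw [Finsupp.add_apply, ht ψ hψ, ht' ψ hψ, add_zero],
            by rw [map_add, hft, hft']; rfl⟩
        inv_mem' := by
          rintro χ ⟨t, ht, hft⟩
          exact ⟨-t, fun ψ hψ => by rw [Finsupp.neg_apply, ht ψ hψ, neg_zero],
            by rw [map_neg, hft]; rfl⟩ }
    have hAmem : ∀ x : Asg, ∃ t : (G →* Kˣ) →₀ ℤ,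
        (∀ ψ ∉ {ψ : G →* Kˣ | b.repr v ψ ≠ 0}, t ψ = 0) ∧ f' t = Additive.ofMul x.val :=
      fun x => x.2
    let lam : Asg →* Kˣ :=
      { toFun := fun x => Additive.toMul (Φ' (Classical.choose (hAmem x)))
        map_one' := by
          show Additive.toMul (Φ' (Classical.choose (hAmem 1))) = 1
          obtain ⟨ht, hft⟩ := Classical.choose_spec (hAmem 1)
          have h1 : Φ' (Classical.choose (hAmem 1)) = Φ' 0 := by
            refine key2 _ _ ht (fun ψ _ => rfl) ?_
            rw [hft, map_zero]; rfl
          rw [h1, map_zero, toMul_zero]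
        map_mul' := by
          intro x y
          show Additive.toMul (Φ' (Classical.choose (hAmem (x * y))))
            = Additive.toMul (Φ' (Classical.choose (hAmem x)))
              * Additive.toMul (Φ' (Classical.choose (hAmem y)))
          obtain ⟨htxy, hfxy⟩ := Classical.choose_spec (hAmem (x * y))
          obtain ⟨htx, hfx⟩ := Classical.choose_spec (hAmem x)
          obtain ⟨hty, hfy⟩ := Classical.choose_spec (hAmem y)
          have h1 : Φ' (Classical.choose (hAmem (x * y)))
              = Φ' (Classical.choose (hAmem x) + Classical.choose (hAmem y)) := by
            refine key2 _ _ htxy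
              (fun ψ hψ => by
                rw [Finsupp.add_apply, htx ψ hψ, hty ψ hψ, add_zero]) ?_
            rw [map_add, hfxy, hfx, hfy]; rfl
          rw [h1, map_add, toMul_add] }
    -- lam takes the value u ψ on each ψ in the support
    have hsingle : ∀ ψ : G →* Kˣ, f' (Finsupp.single ψ 1) = Additive.ofMul ψ := by
      intro ψ
      rw [hf', Finsupp.liftAddHom_apply_single, zmultiplesHom_apply, one_zsmul]
    have hsingleΦ : ∀ ψ : G →* Kˣ, Φ' (Finsupp.single ψ 1) = Additive.ofMul (u ψ) := by
      intro ψ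
      rw [hΦ', Finsupp.liftAddHom_apply_single, zmultiplesHom_apply, one_zsmul]
    have hmemA : ∀ ψ : G →* Kˣ, b.repr v ψ ≠ 0 → ψ ∈ Asg := by
      intro ψ hψ
      refine ⟨Finsupp.single ψ 1, fun φ hφ => ?_, hsingle ψ⟩
      rcases eq_or_ne φ ψ with rfl | hne
      · exact absurd hψ hφ
      · rw [Finsupp.single_eq_of_ne' (Ne.symm hne)]
    have hlam_val : ∀ (ψ : G →* Kˣ) (h : ψ ∈ Asg), b.repr v ψ ≠ 0 →
        lam ⟨ψ, h⟩ = u ψ := by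
      intro ψ h hψ
      obtain ⟨ht, hft⟩ := Classical.choose_spec (hAmem ⟨ψ, h⟩)
      have h1 : Φ' (Classical.choose (hAmem ⟨ψ, h⟩)) = Φ' (Finsupp.single ψ 1) := by
        refine key2 _ _ ht (fun φ hφ => ?_) (by rw [hft, hsingle ψ])
        rcases eq_or_ne φ ψ with rfl | hne
        · exact absurd hψ hφ
        · rw [Finsupp.single_eq_of_ne' (Ne.symm hne)]
      show Additive.toMul (Φ' (Classical.choose (hAmem ⟨ψ, h⟩))) = u ψ
      rw [h1, hsingleΦ ψ, toMul_ofMul]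
    -- extend and dualize
    obtain ⟨Λ, hΛ⟩ := char_extend hGpow Asg lam
    obtain ⟨g, hg⟩ := eval_surjective Λ
    refine ⟨g, ?_⟩
    have hcoord : ∀ ψ : G →* Kˣ, ((ψ g : Kˣ) : K) * b.repr v ψ = b.repr w ψ := by
      intro ψ
      by_cases hψ : b.repr v ψ ≠ 0
      · have hmem := hmemA ψ hψ
        have hwψ : b.repr w ψ ≠ 0 := hsuppvw ψ hψ
        have hug : ψ g = u ψ := by
          rw [hg ψ, hΛ ⟨ψ, hmem⟩, hlam_val ψ hmem hψ]
        rw [hug, hu_val ψ hψ hwψ]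
        field_simp
      · push_neg at hψ
        have hwψ : b.repr w ψ = 0 := by
          by_contra h0
          exact (hsuppwv ψ h0) hψ
        rw [hψ, hwψ, mul_zero]
    apply b.repr.injective
    ext ψ
    rw [hfwd v g ψ]
    exact hcoord ψ
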